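/- Let W_λ be a unilateral weighted shift in ℓ²(ℕ) that is C-symmetric with respect to a conjugation C. Then W_λ is C-selfadjoint if and only if C eₙ ∈ dom(W_λ) for every n ∈ ℕ, where (eₙ) is the canonical orthonormal basis. -/

import Mathlib

open InnerProductSpace in
/-- A conjugation on a complex inner product space: an antilinear involution
satisfying `⟪Cf, Cg⟫ = ⟪g, f⟫`. -/
structure Conjugation (H : Type*) [NormedAddCommGroup H] [InnerProductSpace ℂ H] where
  toFun : H → H
  map_add' : ∀ x y, toFun (x + y) = toFun x + toFun y
  map_smul' : ∀ (c : ℂ) (x : H), toFun (c • x) = (starRingEnd ℂ c) • toFun x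
  invol : ∀ x, toFun (toFun x) = x
  inner_map : ∀ x y, (inner ℂ (toFun x) (toFun y) : ℂ) = inner ℂ y x

/-- `T` is `C`-symmetric: `T ⊆ C T* C`. -/
noncomputable def CSymmetric {H : Type*} [NormedAddCommGroup H] [InnerProductSpace ℂ H]
    [CompleteSpace H] (C : Conjugation H) (T : H →ₗ.[ℂ] H) : Prop :=
  ∀ x : T.domain, ∃ hx : C.toFun x ∈ T.adjoint.domain,
    C.toFun (T.adjoint ⟨C.toFun x, hx⟩) = T x

/-- `T` is `C`-selfadjoint: `T = C T* C`. -/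
noncomputable def CSelfAdjoint {H : Type*} [NormedAddCommGroup H] [InnerProductSpace ℂ H]
    [CompleteSpace H] (C : Conjugation H) (T : H →ₗ.[ℂ] H) : Prop :=
  CSymmetric C T ∧ ∀ y : H, C.toFun y ∈ T.adjoint.domain → y ∈ T.domain

/-- Composition of partially defined linear maps, with its natural (maximal) domain. -/
noncomputable def LinearPMap.pcomp {R E F G : Type*} [Ring R] [AddCommGroup E] [Module R E]
    [AddCommGroup F] [Module R F] [AddCommGroup G] [Module R G]
    (g : F →ₗ.[R] G) (f : E →ₗ.[R] F) : E →ₗ.[R] G :=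
  g.comp (f.domRestrict ((g.domain.comap f.toFun).map f.domain.subtype))
    (by
      rintro ⟨x, hx⟩
      obtain ⟨y, hy, hyx⟩ := (Submodule.mem_inf.mp hx).1
      have h : f.domRestrict ((g.domain.comap f.toFun).map f.domain.subtype) ⟨x, hx⟩ = f y :=
        LinearPMap.domRestrict_apply (by exact hyx.symm)
      rw [h]
      exact hy)

/-- Natural powers of a partially defined linear map, `T^(n+1) = T ∘ T^n`, with
`T^0` the identity on the whole space. -/
noncomputable def LinearPMap.ppow {R E : Type*} [Ring R] [AddCommGroup E] [Module R E]
    (T : E →ₗ.[R] E) : ℕ → E →ₗ.[R] E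
  | 0 => ⟨⊤, (⊤ : Submodule R E).subtype⟩
  | n + 1 => T.pcomp (T.ppow n)

/-- `W` is the unilateral weighted shift in `ℓ²(ℕ)` with weights `lam` (0-indexed:
`W eₙ = lam n • e_{n+1}`): it has the maximal domain
`{f : Σ |lam n * f n|² < ∞}` and acts by `(W f)(n+1) = lam n * f n`, `(W f)(0) = 0`. -/
def IsWeightedShift (lam : ℕ → ℂ) (W : lp (fun _ : ℕ => ℂ) 2 →ₗ.[ℂ] lp (fun _ : ℕ => ℂ) 2) :
    Prop :=
  (∀ f : lp (fun _ : ℕ => ℂ) 2, f ∈ W.domain ↔ Memℓp (fun n => lam n * f n) 2) ∧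
  (∀ f : W.domain, (W f : lp (fun _ : ℕ => ℂ) 2) 0 = 0 ∧
    ∀ n : ℕ, (W f : lp (fun _ : ℕ => ℂ) 2) (n + 1) = lam n * (f : lp (fun _ : ℕ => ℂ) 2) n)

/-- The canonical orthonormal basis of `ℓ²(ℕ)` (0-indexed). -/
noncomputable def e (n : ℕ) : lp (fun _ : ℕ => ℂ) 2 := lp.single 2 n 1


section Aux
open scoped ComplexConjugate

local notation "H" => lp (fun _ : ℕ => ℂ) 2

variable {lam : ℕ → ℂ} {W : H →ₗ.[ℂ] H} (hW : IsWeightedShift lam W)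

theorem inner_e (n : ℕ) (f : H) : (inner ℂ (e n) f : ℂ) = f n := by
  rw [e, lp.inner_single_left]
  simp [RCLike.inner_apply]

include hW

theorem single_mem_dom (n : ℕ) (a : ℂ) : (lp.single 2 n a : H) ∈ W.domain := by
  rw [hW.1]
  have h : (fun m => lam m * (lp.single 2 n a : H) m) = ⇑(lp.single 2 n (lam n * a) : H) := by
    funext m
    by_cases h : m = n
    · subst h; simp [lp.single_apply_self]
    · simp [lp.single_apply_ne _ _ _ h, Pi.single_apply, h]
  rw [h]
  exact lp.memℓp _

theorem e_mem_dom (n : ℕ) : e n ∈ W.domain := single_mem_dom hW n 1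

theorem dom_dense : Dense (W.domain : Set H) := by
  intro f
  exact mem_closure_of_tendsto (lp.hasSum_single ENNReal.ofNat_ne_top f)
    (Filter.Eventually.of_forall fun s =>
      Submodule.sum_mem _ fun i _ => single_mem_dom hW i (f i))

theorem Wx0 (x : W.domain) : (inner ℂ (e 0) (W x : H) : ℂ) = 0 := by
  rw [inner_e, (hW.2 x).1]

theorem Wx_succ (n : ℕ) (x : W.domain) :
    (inner ℂ (e (n+1)) (W x : H) : ℂ) = lam n * (x : H) n := by
  rw [inner_e, (hW.2 x).2 n]

theorem e_mem_adjoint (m : ℕ) : e m ∈ W.adjoint.domain := by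
  apply LinearPMap.mem_adjoint_domain_of_exists
  rcases m with _ | n
  · exact ⟨0, fun x => by rw [inner_zero_left, Wx0 hW]⟩
  · refine ⟨(starRingEnd ℂ (lam n)) • e n, fun x => ?_⟩
    rw [inner_smul_left, RCLike.conj_conj, inner_e, Wx_succ hW]

theorem adjoint_e_succ (n : ℕ) (h : e (n+1) ∈ W.adjoint.domain) :
    W.adjoint ⟨e (n+1), h⟩ = (starRingEnd ℂ (lam n)) • e n := by
  refine LinearPMap.adjoint_apply_eq (dom_dense hW) _ fun x => ?_
  rw [inner_smul_left, RCLike.conj_conj, inner_e, Wx_succ hW]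

end Aux

/-- a `C`-symmetric unilateral weighted shift `W_λ` is `C`-selfadjoint
iff `C eₙ ∈ dom W_λ` for every `n`. -/
theorem stmt_12 (lam : ℕ → ℂ)
    (W : lp (fun _ : ℕ => ℂ) 2 →ₗ.[ℂ] lp (fun _ : ℕ => ℂ) 2)
    (hW : IsWeightedShift lam W)
    (C : Conjugation (lp (fun _ : ℕ => ℂ) 2)) (hsym : CSymmetric C W) :
    CSelfAdjoint C W ↔ ∀ n : ℕ, C.toFun (e n) ∈ W.domain := by
  
  constructor
  · intro hCS n
    exact hCS.2 (C.toFun (e n)) (by rw [C.invol]; exact e_mem_adjoint hW n)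
  · intro hdom
    refine ⟨hsym, fun y hy => ?_⟩
    set g : lp (fun _ : ℕ => ℂ) 2 := C.toFun y with hg
    set h : lp (fun _ : ℕ => ℂ) 2 := W.adjoint ⟨g, hy⟩ with hh
    have key : ∀ n : ℕ, lam n * y n = C.toFun h (n + 1) := by
      intro n
      have h1 : C.toFun (e (n + 1)) ∈ W.domain := hdom (n + 1)
      obtain ⟨hx, hval⟩ := hsym ⟨C.toFun (e (n + 1)), h1⟩
      have hx' : e (n + 1) ∈ W.adjoint.domain := by
        rwa [C.invol] at hx
      have hsub : (⟨C.toFun (C.toFun (e (n + 1))), hx⟩ : W.adjoint.domain) = ⟨e (n + 1), hx'⟩ :=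
        Subtype.ext (C.invol _)
      rw [hsub, adjoint_e_succ hW n hx'] at hval
      have hWC : (W ⟨C.toFun (e (n + 1)), h1⟩ : lp (fun _ : ℕ => ℂ) 2)
          = lam n • C.toFun (e n) := by
        rw [← hval, C.map_smul', RCLike.conj_conj]
      calc lam n * y n = lam n * (inner ℂ (e n) y : ℂ) := by rw [inner_e]
        _ = lam n * (inner ℂ g (C.toFun (e n)) : ℂ) := by rw [hg, C.inner_map]
        _ = (inner ℂ g (lam n • C.toFun (e n)) : ℂ) := by rw [inner_smul_right]
        _ = (inner ℂ g (W ⟨C.toFun (e (n + 1)), h1⟩ : lp (fun _ : ℕ => ℂ) 2) : ℂ) := by rw [hWC]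
        _ = (inner ℂ (W.adjoint ⟨g, hy⟩) ((⟨C.toFun (e (n + 1)), h1⟩ : W.domain) : lp (fun _ : ℕ => ℂ) 2) : ℂ) :=
              ((LinearPMap.adjoint_isFormalAdjoint (dom_dense hW)) ⟨g, hy⟩ ⟨C.toFun (e (n + 1)), h1⟩).symm
        _ = (inner ℂ (C.toFun (C.toFun h)) (C.toFun (e (n + 1))) : ℂ) := by rw [← hh, C.invol]
        _ = (inner ℂ (e (n + 1)) (C.toFun h) : ℂ) := C.inner_map _ _
        _ = C.toFun h (n + 1) := inner_e _ _
    rw [hW.1]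
    have heq : (fun n => lam n * y n) = fun n => C.toFun h (n + 1) := funext key
    rw [heq]
    exact memℓp_gen (((memℓp_gen_iff (by norm_num)).1 (lp.memℓp (C.toFun h))).comp_injective
      Nat.succ_injective)
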